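/- Let G be a profinite group and H ≤ G an abstract subgroup of finite index. Then the index |G:H| (as a natural number) divides the order of G as a supernatural number, i.e., for every prime p, the p-adic valuation of |G:H| is at most the exponent of p in the supernatural order of G. -/

import Mathlib

open scoped ENat

/-- The supernatural order of a profinite group `G` at the prime `p`: the
supremum over open normal subgroups `N` of the exponent of `p` in `|G/N|`. -/
noncomputable def supernaturalOrderExp (G : Type*) [Group G] [TopologicalSpace G] (p : ℕ) : ℕ∞ :=
  ⨆ N ∈ {N : Subgroup G | N.Normal ∧ IsOpen (N : Set G)},
    ((N.index.factorization p : ℕ) : ℕ∞)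

section Aux

variable {Γ : Type*} [Group Γ] [TopologicalSpace Γ] [IsTopologicalGroup Γ]
    [CompactSpace Γ] [T2Space Γ] [TotallyDisconnectedSpace Γ]

/-- In a profinite group, any nontrivial element is excluded by some open normal subgroup. -/
lemma aux_exists_openNormal_not_mem {x : Γ} (hx : x ≠ 1) :
    ∃ W : Subgroup Γ, W.Normal ∧ IsOpen (W : Set Γ) ∧ x ∉ W := by
  have h1 : (1 : Γ) ∈ ({x}ᶜ : Set Γ) := by simp [hx.symm]
  have hopen : IsOpen ({x}ᶜ : Set Γ) := isClosed_singleton.isOpen_compl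
  obtain ⟨V, ⟨h1V, hV⟩, hVsub⟩ := (nhds_basis_clopen (1 : Γ)).mem_iff.mp (hopen.mem_nhds h1)
  obtain ⟨N, hN⟩ := IsTopologicalGroup.exist_openNormalSubgroup_sub_clopen_nhds_of_one hV h1V
  refine ⟨N.toSubgroup, N.isNormal', N.toOpenSubgroup.isOpen, fun hxN => ?_⟩
  exact (hVsub (hN hxN)) (Set.mem_singleton x)

/-- If every open normal subgroup of a profinite group has index coprime to `p`,
then the `p`-th power map is surjective. -/
lemma aux_pow_surjective (p : ℕ) (hp : p.Prime)
    (h : ∀ W : Subgroup Γ, W.Normal → IsOpen (W : Set Γ) → ¬ p ∣ W.index) :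
    Function.Surjective (fun g : Γ => g ^ p) := by
  intro a
  let ι := {W : Subgroup Γ // W.Normal ∧ IsOpen (W : Set Γ)}
  haveI : Nonempty ι := ⟨⟨⊤, inferInstance, by rw [Subgroup.coe_top]; exact isOpen_univ⟩⟩
  let t : ι → Set Γ := fun W => (fun g : Γ => a⁻¹ * g ^ p) ⁻¹' (W.1 : Set Γ)
  have htc : ∀ W : ι, IsClosed (t W) := fun W =>
    ((W.1.isClosed_of_isOpen W.2.2)).preimage (continuous_const.mul (continuous_pow p))
  have htn : ∀ W : ι, (t W).Nonempty := by
    intro W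
    haveI : W.1.Normal := W.2.1
    haveI := Subgroup.quotient_finite_of_isOpen W.1 W.2.2
    have hcop : (Nat.card (Γ ⧸ W.1)).Coprime p := by
      rw [← Subgroup.index_eq_card]
      exact Nat.Coprime.symm ((hp.coprime_iff_not_dvd).mpr (h W.1 W.2.1 W.2.2))
    obtain ⟨y, hy⟩ := hcop.pow_left_bijective.surjective ((a : Γ) : Γ ⧸ W.1)
    obtain ⟨g, rfl⟩ := QuotientGroup.mk_surjective y
    have hmk : ((g ^ p : Γ) : Γ ⧸ W.1) = ((a : Γ) : Γ ⧸ W.1) := by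
      rw [← hy]; rfl
    exact ⟨g, QuotientGroup.eq.mp hmk.symm⟩
  have htd : Directed (· ⊇ ·) t := by
    intro W₁ W₂
    haveI h1 := W₁.2.1
    haveI h2 := W₂.2.1
    refine ⟨⟨W₁.1 ⊓ W₂.1, inferInstance, ?_⟩, ?_, ?_⟩
    · rw [Subgroup.coe_inf]; exact W₁.2.2.inter W₂.2.2
    · intro g hg
      exact (Subgroup.mem_inf.mp hg).1
    · intro g hg
      exact (Subgroup.mem_inf.mp hg).2
  obtain ⟨g, hg⟩ := IsCompact.nonempty_iInter_of_directed_nonempty_isCompact_isClosed t htd htn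
    (fun W => (htc W).isCompact) htc
  refine ⟨g, ?_⟩
  have hone : a⁻¹ * g ^ p = 1 := by
    by_contra hne
    obtain ⟨W, hWn, hWo, hWx⟩ := aux_exists_openNormal_not_mem hne
    exact hWx (Set.mem_iInter.mp hg ⟨W, hWn, hWo⟩)
  exact (inv_mul_eq_one.mp hone).symm

/-- If every open normal subgroup of a profinite group has index coprime to `p`,
then every finite index subgroup has index coprime to `p`. -/
lemma aux_not_dvd_index (p : ℕ) (hp : p.Prime)
    (h : ∀ W : Subgroup Γ, W.Normal → IsOpen (W : Set Γ) → ¬ p ∣ W.index)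
    (K : Subgroup Γ) (hK : K.index ≠ 0) : ¬ p ∣ K.index := by
  intro hdvd
  haveI : K.FiniteIndex := ⟨hK⟩
  set C := K.normalCore with hC
  haveI : C.FiniteIndex := Subgroup.finiteIndex_normalCore K
  haveI : Finite (Γ ⧸ C) := by
    apply Nat.finite_of_card_ne_zero
    rw [← Subgroup.index_eq_card]
    exact Subgroup.FiniteIndex.index_ne_zero
  have hsurj : Function.Surjective (fun q : Γ ⧸ C => q ^ p) := by
    intro q
    obtain ⟨a, rfl⟩ := QuotientGroup.mk_surjective q
    obtain ⟨g, hg⟩ := aux_pow_surjective p hp h a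
    refine ⟨(g : Γ ⧸ C), ?_⟩
    show ((g : Γ ⧸ C)) ^ p = _
    rw [show ((g : Γ ⧸ C)) ^ p = ((g ^ p : Γ) : Γ ⧸ C) from rfl]
    simp only at hg
    rw [hg]
  have hinj : Function.Injective (fun q : Γ ⧸ C => q ^ p) :=
    Finite.injective_iff_surjective.mpr hsurj
  haveI := Fact.mk hp
  have hpcard : p ∣ Nat.card (Γ ⧸ C) := by
    rw [← Subgroup.index_eq_card]
    exact hdvd.trans (Subgroup.index_dvd_of_le K.normalCore_le)
  obtain ⟨x, hx⟩ := exists_prime_orderOf_dvd_card' p hpcard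
  have hx1 : x ^ p = 1 := by rw [← hx]; exact pow_orderOf_eq_one x
  have : x = 1 := hinj (by simpa using hx1)
  rw [this, orderOf_one] at hx
  exact hp.one_lt.ne' hx.symm

end Aux

/-- The index of a finite index subgroup of a profinite group divides the
supernatural order of the group: componentwise at every prime. -/
theorem index_divides_supernatural_order
    (G : Type*) [Group G] [TopologicalSpace G] [IsTopologicalGroup G]
    [CompactSpace G] [T2Space G] [TotallyDisconnectedSpace G]
    (H : Subgroup G) (hH : H.index ≠ 0) (p : ℕ) (hp : p.Prime) :
    ((H.index.factorization p : ℕ) : ℕ∞) ≤ supernaturalOrderExp G p := by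
  by_contra hcon
  push_neg at hcon
  set v := H.index.factorization p with hv
  have hSne : supernaturalOrderExp G p ≠ ⊤ := ne_top_of_lt hcon
  obtain ⟨n, hn⟩ : ∃ n : ℕ, supernaturalOrderExp G p = (n : ℕ∞) :=
    ⟨(supernaturalOrderExp G p).toNat, (ENat.coe_toNat hSne).symm⟩
  have hnv : n < v := by
    rw [hn] at hcon
    exact_mod_cast hcon
  have hbound : ∀ N : Subgroup G, N.Normal → IsOpen (N : Set G) →
      N.index.factorization p ≤ n := by
    intro N h1 h2
    have hle : ((N.index.factorization p : ℕ) : ℕ∞) ≤ supernaturalOrderExp G p :=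
      le_iSup₂ (f := fun (N : Subgroup G)
        (_ : N ∈ {N : Subgroup G | N.Normal ∧ IsOpen (N : Set G)}) =>
        ((N.index.factorization p : ℕ) : ℕ∞)) N ⟨h1, h2⟩
    rw [hn] at hle
    exact_mod_cast hle
  obtain ⟨N₀, hN₀n, hN₀o, hN₀⟩ : ∃ N₀ : Subgroup G, N₀.Normal ∧ IsOpen (N₀ : Set G) ∧
      N₀.index.factorization p = n := by
    rcases Nat.eq_zero_or_pos n with h0 | hpos
    · exact ⟨⊤, inferInstance, by rw [Subgroup.coe_top]; exact isOpen_univ,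
        by simp [Subgroup.index_top, h0]⟩
    · have hlt : ((n - 1 : ℕ) : ℕ∞) < supernaturalOrderExp G p := by
        rw [hn]
        exact_mod_cast Nat.sub_lt hpos one_pos
      rw [supernaturalOrderExp] at hlt
      obtain ⟨N, hlt⟩ := lt_iSup_iff.mp hlt
      obtain ⟨hNmem, hlt⟩ := lt_iSup_iff.mp hlt
      refine ⟨N, hNmem.1, hNmem.2, le_antisymm (hbound N hNmem.1 hNmem.2) ?_⟩
      have : (n - 1) < N.index.factorization p := by exact_mod_cast hlt
      omega
  haveI : Finite (G ⧸ N₀) := Subgroup.quotient_finite_of_isOpen N₀ hN₀o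
  have hN₀idx : N₀.index ≠ 0 := Subgroup.index_ne_zero_of_finite
  -- the subgroup `N₀` is itself a profinite group
  haveI : CompactSpace ↥N₀ :=
    isCompact_iff_compactSpace.mp ((N₀.isClosed_of_isOpen hN₀o).isCompact)
  -- every open normal subgroup of `N₀` has index coprime to `p`
  have key : ∀ W : Subgroup ↥N₀, W.Normal → IsOpen (W : Set ↥N₀) → ¬ p ∣ W.index := by
    intro W hWn hWo
    set V := W.map N₀.subtype with hVdef
    have hVopen : IsOpen (V : Set G) := by
      rw [hVdef, Subgroup.coe_map, Subgroup.coe_subtype]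
      exact hN₀o.isOpenMap_subtype_val _ hWo
    have hVle : V ≤ N₀ := Subgroup.map_subtype_le W
    haveI : Finite (G ⧸ V) := Subgroup.quotient_finite_of_isOpen V hVopen
    haveI : V.FiniteIndex := ⟨Subgroup.index_ne_zero_of_finite⟩
    set M := V.normalCore with hMdef
    haveI : M.FiniteIndex := Subgroup.finiteIndex_normalCore V
    have hMopen : IsOpen (M : Set G) :=
      Subgroup.isOpen_of_isClosed_of_finiteIndex M
        (V.normalCore_isClosed (V.isClosed_of_isOpen hVopen))
    have hMle : M ≤ N₀ := (V.normalCore_le).trans hVle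
    have hMidx : M.index ≠ 0 := Subgroup.FiniteIndex.index_ne_zero
    have hmul : M.relIndex N₀ * N₀.index = M.index := Subgroup.relIndex_mul_index hMle
    have hrel0 : M.relIndex N₀ ≠ 0 := by
      intro h0
      rw [h0, zero_mul] at hmul
      exact hMidx hmul.symm
    have hfactM : M.index.factorization p ≤ n := hbound M V.normalCore_normal hMopen
    have hadd : (M.relIndex N₀).factorization p + N₀.index.factorization p
        = M.index.factorization p := by
      rw [← hmul, Nat.factorization_mul hrel0 hN₀idx]
      simp
    have hrelfact : (M.relIndex N₀).factorization p = 0 := by omega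
    have hpnd : ¬ p ∣ M.relIndex N₀ := by
      intro hd
      have := (Nat.Prime.factorization_pos_of_dvd hp hrel0 hd)
      omega
    have hWV : W.index = V.relIndex N₀ := by
      unfold Subgroup.relIndex
      rw [hVdef, Subgroup.subgroupOf, Subgroup.comap_map_eq_self_of_injective
        N₀.subtype_injective]
    intro hdvd
    exact hpnd (dvd_trans (hWV ▸ hdvd)
      (Subgroup.relIndex_dvd_of_le_left N₀ V.normalCore_le))
  -- apply the key lemma to `H ∩ N₀` inside `N₀`
  haveI : H.FiniteIndex := ⟨hH⟩
  haveI : N₀.FiniteIndex := ⟨hN₀idx⟩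
  have hinfidx : (H ⊓ N₀).index ≠ 0 := Subgroup.FiniteIndex.index_ne_zero
  have hm : H.relIndex N₀ * N₀.index = (H ⊓ N₀).index := by
    rw [← Subgroup.inf_relIndex_right]
    exact Subgroup.relIndex_mul_index inf_le_right
  have hrelH : H.relIndex N₀ ≠ 0 := by
    intro h0
    rw [h0, zero_mul] at hm
    exact hinfidx hm.symm
  have hnotp : ¬ p ∣ H.relIndex N₀ :=
    aux_not_dvd_index p hp key (H.subgroupOf N₀) hrelH
  have hdvd1 : p ^ v ∣ H.index := Nat.ordProj_dvd _ _
  have hdvd2 : H.index ∣ (H ⊓ N₀).index := Subgroup.index_dvd_of_le inf_le_left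
  have hpow : p ^ v ∣ H.relIndex N₀ * N₀.index := hm ▸ hdvd1.trans hdvd2
  have hcop : Nat.Coprime (p ^ v) (H.relIndex N₀) :=
    Nat.Coprime.pow_left _ ((hp.coprime_iff_not_dvd).mpr hnotp)
  have hfin : p ^ v ∣ N₀.index := hcop.dvd_of_dvd_mul_left hpow
  have : v ≤ N₀.index.factorization p :=
    (Nat.Prime.pow_dvd_iff_le_factorization hp hN₀idx).mp hfin
  omega
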